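/- arXiv:1004.3956 — 2 statements merged into one kernel-verified Lean document; each statement's English description precedes it below -/
import Mathlib

section
/- Let f : [0,1) → ℝ be C², positive, nondecreasing and convex with f(t) → ∞ as t → 1⁻, and define g : [0,∞) → ℝ by g(v) = e^v · f(1 − e^{−v}). Then g is positive, nondecreasing, convex, and superlinear: g(t)/t → ∞ as t → ∞. -/
open Set Filter Topology Real

/-- With `f` C², positive, nondecreasing, convex on `[0,1)` and blowing up at `1⁻`,
the function `g(v) = e^v f(1 - e^{-v})` is positive, nondecreasing, convex and
superlinear on `[0,∞)`. -/
theorem stmt1 (f g : ℝ → ℝ)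
    (hf : ContDiffOn ℝ 2 f (Ico 0 1))
    (hpos : ∀ t ∈ Ico (0:ℝ) 1, 0 < f t)
    (hmono : MonotoneOn f (Ico 0 1))
    (hconv : ConvexOn ℝ (Ico 0 1) f)
    (hblow : Tendsto f (𝓝[<] (1:ℝ)) atTop)
    (hg : ∀ v, g v = Real.exp v * f (1 - Real.exp (-v))) :
    (∀ v ∈ Ici (0:ℝ), 0 < g v) ∧ MonotoneOn g (Ici 0) ∧ ConvexOn ℝ (Ici 0) g ∧
      Tendsto (fun t => g t / t) atTop atTop := by
  -- membership facts
  have hmem : ∀ v : ℝ, 0 ≤ v → (1 - Real.exp (-v)) ∈ Ico (0:ℝ) 1 := by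
    intro v hv
    have h1 : Real.exp (-v) ≤ 1 := by
      calc Real.exp (-v) ≤ Real.exp 0 := Real.exp_le_exp.mpr (by linarith)
        _ = 1 := Real.exp_zero
    exact ⟨by linarith, by linarith [Real.exp_pos (-v)]⟩
  have hmemo : ∀ v : ℝ, 0 < v → (1 - Real.exp (-v)) ∈ Ioo (0:ℝ) 1 := by
    intro v hv
    have h1 : Real.exp (-v) < 1 := by
      calc Real.exp (-v) < Real.exp 0 := Real.exp_lt_exp.mpr (by linarith)
        _ = 1 := Real.exp_zero
    exact ⟨by linarith, by linarith [Real.exp_pos (-v)]⟩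
  have hsmono : ∀ a b : ℝ, a ≤ b → (1 - Real.exp (-a)) ≤ 1 - Real.exp (-b) := by
    intro a b hab
    have := Real.exp_le_exp.mpr (neg_le_neg hab)
    linarith
  -- positivity
  have Hpos : ∀ v ∈ Ici (0:ℝ), 0 < g v := by
    intro v hv
    rw [hg v]
    exact mul_pos (Real.exp_pos v) (hpos _ (hmem v hv))
  -- monotonicity of the "formula" part
  have Hmonoaux : ∀ a b : ℝ, 0 ≤ a → 0 ≤ b → a ≤ b →
      Real.exp a * f (1 - Real.exp (-a)) ≤ Real.exp b * f (1 - Real.exp (-b)) := by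
    intro a b ha hb hab
    exact mul_le_mul (Real.exp_le_exp.mpr hab)
      (hmono (hmem a ha) (hmem b hb) (hsmono a b hab))
      (hpos _ (hmem a ha)).le (Real.exp_pos b).le
  have Hmono : MonotoneOn g (Ici 0) := by
    intro a ha b hb hab
    rw [hg a, hg b]
    exact Hmonoaux a b ha hb hab
  -- differentiability of f at interior points
  have hfd : ∀ x ∈ Ioo (0:ℝ) 1, DifferentiableAt ℝ f x := by
    intro x hx
    exact (hf.contDiffAt (Ico_mem_nhds hx.1 hx.2)).differentiableAt two_ne_zero
  -- derivative of g on Ioi 0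
  have hgfun : g = fun v => Real.exp v * f (1 - Real.exp (-v)) := funext hg
  have hG1 : ∀ v : ℝ, 0 < v →
      HasDerivAt g (Real.exp v * f (1 - Real.exp (-v)) + deriv f (1 - Real.exp (-v))) v := by
    intro v hv
    have hs : HasDerivAt (fun v : ℝ => 1 - Real.exp (-v)) (Real.exp (-v)) v := by
      have h2 : HasDerivAt (fun v : ℝ => Real.exp (-v)) (Real.exp (-v) * (-1)) v :=
        (Real.hasDerivAt_exp (-v)).comp v (by simpa using (hasDerivAt_neg v))
      simpa using h2.const_sub (1:ℝ)
    have hfs : HasDerivAt f (deriv f (1 - Real.exp (-v))) (1 - Real.exp (-v)) :=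
      (hfd _ (hmemo v hv)).hasDerivAt
    have hcomp : HasDerivAt (fun v : ℝ => f (1 - Real.exp (-v)))
        (deriv f (1 - Real.exp (-v)) * Real.exp (-v)) v := hfs.comp v hs
    have hmul := (Real.hasDerivAt_exp v).mul hcomp
    rw [hgfun]
    refine hmul.congr_deriv ?_
    rw [Real.exp_neg]
    field_simp
  -- monotonicity of deriv f from convexity
  have hconv' : ConvexOn ℝ (Ioo (0:ℝ) 1) f := hconv.subset Ioo_subset_Ico_self (convex_Ioo 0 1)
  have hdmono : MonotoneOn (deriv f) (Ioo (0:ℝ) 1) := hconv'.monotoneOn_deriv hfd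
  -- convexity
  have Hconv : ConvexOn ℝ (Ici 0) g := by
    apply MonotoneOn.convexOn_of_deriv (convex_Ici 0)
    · -- continuity
      rw [hgfun]
      apply ContinuousOn.mul Real.continuous_exp.continuousOn
      apply hf.continuousOn.comp
      · exact Continuous.continuousOn (by continuity)
      · intro v hv
        exact hmem v hv
    · -- differentiability on interior
      rw [interior_Ici]
      intro v hv
      exact (hG1 v hv).differentiableAt.differentiableWithinAt
    · -- monotonicity of deriv g on interior
      rw [interior_Ici]
      intro a ha b hb hab
      rw [(hG1 a ha).deriv, (hG1 b hb).deriv]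
      exact add_le_add (Hmonoaux a b (le_of_lt ha) (le_of_lt hb) hab)
        (hdmono (hmemo a ha) (hmemo b hb) (hsmono a b hab))
  -- superlinearity
  have Hsup : Tendsto (fun t => g t / t) atTop atTop := by
    have hlim : Tendsto (fun t : ℝ => f 0 * (Real.exp t / t)) atTop atTop := by
      have := Real.tendsto_exp_div_pow_atTop 1
      simp only [pow_one] at this
      exact this.const_mul_atTop (hpos 0 (by simp))
    apply tendsto_atTop_mono' atTop _ hlim
    filter_upwards [eventually_ge_atTop (1:ℝ)] with t ht
    have ht0 : (0:ℝ) < t := by linarith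
    rw [hg t]
    have hfle : f 0 ≤ f (1 - Real.exp (-t)) :=
      hmono (by simp) (hmem t ht0.le) (by simpa using (hmem t ht0.le).1)
    calc f 0 * (Real.exp t / t) = Real.exp t * f 0 / t := by ring
      _ ≤ Real.exp t * f (1 - Real.exp (-t)) / t := by
          gcongr
  exact ⟨Hpos, Hmono, Hconv, Hsup⟩
end

section
/- Let h : [0,∞) → ℝ be C¹, t₀ > 0, and suppose t ↦ t² h'(t) is nondecreasing on [t₀,∞). Let α > 0 and define K(t) = α² ∫₀ᵗ s² h'(s)² e^{2α h(s)} ds. Then there exists a constant C such that K(t) ≤ (α/2)·t² h'(t) e^{2α h(t)} + C for all t ≥ t₀. -/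
open Set Real intervalIntegral MeasureTheory

/-- Stieltjes integration-by-parts estimate for
`K(t) = α² ∫₀ᵗ s² h'(s)² e^{2αh(s)} ds` when `t ↦ t²h'(t)` is nondecreasing on
`[t₀,∞)`. -/
theorem stmt10 (h : ℝ → ℝ) (t₀ α : ℝ)
    (hh : ContDiffOn ℝ 1 h (Ici 0))
    (hh' : ∀ t ∈ Ici (0:ℝ), 0 ≤ deriv h t)
    (ht₀ : 0 < t₀)
    (hmono : MonotoneOn (fun t => t ^ 2 * deriv h t) (Ici t₀))
    (hα : 0 < α)
    (K : ℝ → ℝ)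
    (hK : ∀ t, K t = α ^ 2 * ∫ s in (0:ℝ)..t,
        s ^ 2 * (deriv h s) ^ 2 * Real.exp (2 * α * h s)) :
    ∃ C : ℝ, ∀ t ≥ t₀,
      K t ≤ α / 2 * t ^ 2 * deriv h t * Real.exp (2 * α * h t) + C := by
  set g : ℝ → ℝ := derivWithin h (Ici 0) with hg_def
  have hgcont : ContinuousOn g (Ici 0) :=
    hh.continuousOn_derivWithin (uniqueDiffOn_Ici 0) le_rfl
  have hhd : ∀ s ∈ Ioi (0:ℝ), HasDerivAt h (g s) s := by
    intro s hs
    have h1 : DifferentiableWithinAt ℝ h (Ici 0) s :=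
      (hh.differentiableOn one_ne_zero) s (mem_Ici.mpr (le_of_lt hs))
    exact h1.hasDerivWithinAt.hasDerivAt (Ici_mem_nhds hs)
  have hderiv_eq : ∀ s ∈ Ioi (0:ℝ), deriv h s = g s := fun s hs => (hhd s hs).deriv
  have hhcont : ContinuousOn h (Ici 0) := hh.continuousOn
  set E : ℝ → ℝ := fun s => Real.exp (2 * α * h s) with hE_def
  have hEcont : ContinuousOn E (Ici 0) :=
    Real.continuous_exp.comp_continuousOn (continuousOn_const.mul hhcont)
  set F : ℝ → ℝ := fun s => s ^ 2 * (deriv h s) ^ 2 * E s with hF_def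
  set G : ℝ → ℝ := fun s => s ^ 2 * g s ^ 2 * E s with hG_def
  have hGcont : ContinuousOn G (Ici 0) :=
    (((continuousOn_id.pow 2).mul (hgcont.pow 2)).mul hEcont)
  -- interval integrability of F on subintervals of [0,∞)
  have hFint : ∀ a b : ℝ, 0 ≤ a → a ≤ b → IntervalIntegrable F volume a b := by
    intro a b ha hab
    have hsub : uIcc a b ⊆ Ici 0 := by
      rw [uIcc_of_le hab]
      exact fun x hx => le_trans ha hx.1
    have hGint : IntervalIntegrable G volume a b :=
      (hGcont.mono hsub).intervalIntegrable
    apply hGint.congr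
    have : uIoc a b ⊆ Ioi 0 := by
      rw [uIoc_of_le hab]
      exact fun x hx => lt_of_le_of_lt ha hx.1
    intro x hx
    have hx0 : x ∈ Ioi (0:ℝ) := this hx
    simp only [hF_def, hG_def, hderiv_eq x hx0]
  refine ⟨K t₀, fun t ht => ?_⟩
  have ht0 : (0:ℝ) ≤ t := le_trans ht₀.le ht
  -- split the integral
  have hsplit : K t = K t₀ + α ^ 2 * ∫ s in t₀..t, F s := by
    rw [hK, hK]
    have := integral_add_adjacent_intervals (hFint 0 t₀ le_rfl ht₀.le)
      (hFint t₀ t ht₀.le ht)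
    simp only [hF_def, hE_def] at this ⊢
    rw [← this]; ring
  set M : ℝ := t ^ 2 * deriv h t with hM_def
  have hM0 : 0 ≤ M := mul_nonneg (sq_nonneg t) (hh' t (le_trans ht₀.le ht))
  -- FTC : ∫ t₀..t, E s * (2α g s) = E t - E t₀
  have hftc : (∫ s in t₀..t, E s * (2 * α * g s)) = E t - E t₀ := by
    apply integral_eq_sub_of_hasDerivAt
    · intro x hx
      have hx0 : x ∈ Ioi (0:ℝ) := lt_of_lt_of_le ht₀ (by
        rcases hx with ⟨h1, _⟩; rwa [min_eq_left ht] at h1)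
      have h1 : HasDerivAt (fun s => 2 * α * h s) (2 * α * g x) x :=
        (hhd x hx0).const_mul (2 * α)
      simpa [hE_def, mul_comm] using h1.exp
    · apply ContinuousOn.intervalIntegrable
      have hsub : uIcc t₀ t ⊆ Ici 0 := by
        rw [uIcc_of_le ht]
        exact fun x hx => le_trans ht₀.le hx.1
      exact (hEcont.mono hsub).mul
        ((continuousOn_const.mul (hgcont.mono hsub)))
  -- pointwise bound on [t₀, t]
  have hptwise : ∀ s ∈ Icc t₀ t, F s ≤ (2*α)⁻¹ * M * (E s * (2 * α * g s)) := by
    intro s hs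
    have hs0 : s ∈ Ioi (0:ℝ) := lt_of_lt_of_le ht₀ hs.1
    have hgs : 0 ≤ g s := (hderiv_eq s hs0) ▸ hh' s (mem_Ici.mpr hs0.le)
    have hEs : 0 ≤ E s := (Real.exp_pos _).le
    have hmle : s ^ 2 * g s ≤ M := by
      rw [← hderiv_eq s hs0]
      exact hmono hs.1 (le_trans hs.1 hs.2) hs.2
    have : F s = (s ^ 2 * deriv h s) * (deriv h s * E s) := by
      simp only [hF_def]; ring
    rw [this, hderiv_eq s hs0]
    have h2 : (s ^ 2 * g s) * (g s * E s) ≤ M * (g s * E s) :=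
      mul_le_mul_of_nonneg_right hmle (mul_nonneg hgs hEs)
    calc (s ^ 2 * g s) * (g s * E s) ≤ M * (g s * E s) := h2
      _ = (2*α)⁻¹ * M * (E s * (2 * α * g s)) := by
          field_simp
  -- integrate the bound
  have hFintI : IntervalIntegrable F volume t₀ t := hFint t₀ t ht₀.le ht
  have hBint : IntervalIntegrable (fun s => (2*α)⁻¹ * M * (E s * (2 * α * g s))) volume t₀ t := by
    apply ContinuousOn.intervalIntegrable
    have hsub : uIcc t₀ t ⊆ Ici 0 := by
      rw [uIcc_of_le ht]
      exact fun x hx => le_trans ht₀.le hx.1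
    exact continuousOn_const.mul ((hEcont.mono hsub).mul
      (continuousOn_const.mul (hgcont.mono hsub)))
  have hintle : (∫ s in t₀..t, F s) ≤ (2*α)⁻¹ * M * (E t - E t₀) := by
    calc (∫ s in t₀..t, F s)
        ≤ ∫ s in t₀..t, (2*α)⁻¹ * M * (E s * (2 * α * g s)) :=
          integral_mono_on ht hFintI hBint hptwise
      _ = (2*α)⁻¹ * M * ∫ s in t₀..t, E s * (2 * α * g s) := by
          rw [intervalIntegral.integral_const_mul]
      _ = (2*α)⁻¹ * M * (E t - E t₀) := by rw [hftc]
  have hEt₀ : 0 ≤ E t₀ := (Real.exp_pos _).le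
  have : K t ≤ K t₀ + α ^ 2 * ((2*α)⁻¹ * M * (E t - E t₀)) := by
    rw [hsplit]
    have := mul_le_mul_of_nonneg_left hintle (le_of_lt (pow_pos hα 2))
    linarith
  have hfin : α ^ 2 * ((2*α)⁻¹ * M * (E t - E t₀)) ≤ α / 2 * M * E t := by
    have h1 : α ^ 2 * ((2*α)⁻¹ * M * (E t - E t₀)) = α / 2 * M * (E t - E t₀) := by
      field_simp
    rw [h1]
    nlinarith [mul_nonneg hM0 hEt₀, mul_nonneg (mul_nonneg hα.le hM0) hEt₀]
  calc K t ≤ K t₀ + α ^ 2 * ((2*α)⁻¹ * M * (E t - E t₀)) := this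
    _ ≤ α / 2 * M * E t + K t₀ := by linarith
    _ = α / 2 * t ^ 2 * deriv h t * E t + K t₀ := by rw [hM_def]; ring
end
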